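/- If T is a tree, then the clique number of L(T)^2 equals max over edges {x,y} of T of d(x) + d(y) - 1, where d denotes vertex degree in T. Consequently the strong chromatic index of a tree T equals this maximum. -/

import Mathlib

open SimpleGraph

/-- The square of a graph: same vertices, adjacency iff distance 1 or 2. -/
def SimpleGraph.square {V : Type*} (G : SimpleGraph V) : SimpleGraph V where
  Adj u v := u ≠ v ∧ (G.Adj u v ∨ ∃ w, G.Adj u w ∧ G.Adj w v)
  symm := by
    constructor
    rintro u v ⟨h, h' | ⟨w, hw1, hw2⟩⟩
    · exact ⟨h.symm, Or.inl h'.symm⟩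
    · exact ⟨h.symm, Or.inr ⟨w, hw2.symm, hw1.symm⟩⟩
  loopless := ⟨fun v h => h.1 rfl⟩

/-- `G` has an induced cycle of length `n`. -/
def SimpleGraph.HasInducedCycle {V : Type*} (G : SimpleGraph V) (n : ℕ) : Prop :=
  Nonempty (cycleGraph n ↪g G)

/-- A graph is chordal if it has no induced cycle of length at least 4. -/
def SimpleGraph.Chordal {V : Type*} (G : SimpleGraph V) : Prop :=
  ∀ n, 4 ≤ n → ¬ G.HasInducedCycle n

set_option linter.unusedSectionVars false
set_option maxHeartbeats 1600000

namespace StrongTreeAux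

open Finset

section TreeBasics

variable {V : Type*} [DecidableEq V] {T : SimpleGraph V}

lemma no_detour (hT : T.IsAcyclic) {w v : V} (h : T.Adj w v)
    (p : T.Walk w v) (he : s(w, v) ∉ p.edges) : False := by
  have hb := (SimpleGraph.isAcyclic_iff_forall_edge_isBridge.mp hT) (T.mem_edgeSet.mpr h)
  rw [SimpleGraph.isBridge_iff] at hb
  exact hb (SimpleGraph.reachable_delete_edges_iff_exists_walk.mpr ⟨p, he⟩)

lemma dist_le_of_mem_support {r x y : V} (p : T.Walk r x) (hy : y ∈ p.support) :
    T.dist r y ≤ p.length :=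
  le_trans (SimpleGraph.dist_le (p.takeUntil y hy)) (p.length_takeUntil_le hy)

lemma dist_lt_of_mem_support {r x y : V} (p : T.Walk r x) (hp : p.length = T.dist r x)
    (hy : y ∈ p.support) (hxy : y ≠ x) : T.dist r y < T.dist r x := by
  have h1 : T.dist r y ≤ (p.takeUntil y hy).length := SimpleGraph.dist_le _
  have h2 := congrArg Walk.length (p.take_spec hy)
  rw [Walk.length_append] at h2
  have h3 : (p.dropUntil y hy).length ≠ 0 := fun h0 => hxy (Walk.eq_of_length_eq_zero h0)
  omega

lemma adj_dist (hT : T.IsTree) (r : V) {x y : V} (h : T.Adj x y) :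
    T.dist r y = T.dist r x + 1 ∨ T.dist r x = T.dist r y + 1 := by
  have hc := hT.isConnected
  have hxy : T.dist r y ≤ T.dist r x + 1 := by
    calc T.dist r y ≤ T.dist r x + T.dist x y := hc.dist_triangle
    _ = T.dist r x + 1 := by rw [SimpleGraph.dist_eq_one_iff_adj.mpr h]
  have hyx : T.dist r x ≤ T.dist r y + 1 := by
    calc T.dist r x ≤ T.dist r y + T.dist y x := hc.dist_triangle
    _ = T.dist r y + 1 := by rw [SimpleGraph.dist_eq_one_iff_adj.mpr h.symm]
  by_contra hne
  push_neg at hne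
  have heq : T.dist r x = T.dist r y := by omega
  obtain ⟨p, hp, hpl⟩ := hc.exists_path_of_dist r x
  obtain ⟨q, hq, hql⟩ := hc.exists_path_of_dist r y
  have hyp : y ∉ p.support := fun hys =>
    absurd (dist_lt_of_mem_support p hpl hys h.ne') (by omega)
  have hxq : x ∉ q.support := fun hxs =>
    absurd (dist_lt_of_mem_support q hql hxs h.ne) (by omega)
  refine no_detour hT.IsAcyclic h (p.reverse.append q) fun hmem => ?_
  rw [Walk.edges_append, List.mem_append, Walk.edges_reverse, List.mem_reverse] at hmem
  rcases hmem with hm | hm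
  · exact hyp (p.snd_mem_support_of_mem_edges hm)
  · exact hxq (q.fst_mem_support_of_mem_edges hm)

lemma parent_unique (hT : T.IsTree) (r : V) {x x' y : V} (hx : T.Adj x y) (hx' : T.Adj x' y)
    (hd : T.dist r x + 1 = T.dist r y) (hd' : T.dist r x' + 1 = T.dist r y) : x = x' := by
  by_contra hne
  obtain ⟨p, hp, hpl⟩ := hT.isConnected.exists_path_of_dist r x
  obtain ⟨q, hq, hql⟩ := hT.isConnected.exists_path_of_dist r x'
  have hyp : y ∉ p.support := fun hys => by
    have := dist_le_of_mem_support p hys; omega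
  have hyq : y ∉ q.support := fun hys => by
    have := dist_le_of_mem_support q hys; omega
  refine no_detour hT.IsAcyclic hx (p.reverse.append (q.concat hx')) fun hmem => ?_
  rw [Walk.edges_append, List.mem_append, Walk.edges_reverse, List.mem_reverse,
    Walk.edges_concat, List.concat_eq_append, List.mem_append, List.mem_singleton] at hmem
  rcases hmem with hm | hm | hm
  · exact hyp (p.snd_mem_support_of_mem_edges hm)
  · exact hyq (q.snd_mem_support_of_mem_edges hm)
  · rw [Sym2.eq_iff] at hm
    rcases hm with ⟨rfl, -⟩ | ⟨rfl, rfl⟩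
    · exact hne rfl
    · exact hx.ne rfl

lemma exists_parent (hT : T.IsTree) (r y : V) (hy : T.dist r y ≠ 0) :
    ∃ x, T.Adj x y ∧ T.dist r x + 1 = T.dist r y := by
  obtain ⟨p, hp, hpl⟩ := hT.isConnected.exists_path_of_dist r y
  have hqlen : p.reverse.length = T.dist r y := by
    rw [Walk.length_reverse]; exact hpl
  rcases hq : p.reverse with _ | ⟨hadj, q'⟩
  · rw [hq] at hqlen; simp at hy
  · rename_i u
    rw [hq] at hqlen
    rw [Walk.length_cons] at hqlen
    refine ⟨u, hadj.symm, ?_⟩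
    have h1 : T.dist r u ≤ q'.length := by
      rw [SimpleGraph.dist_comm]; exact SimpleGraph.dist_le q'
    have h2 : T.dist r y ≤ T.dist r u + 1 := by
      calc T.dist r y ≤ T.dist r u + T.dist u y := hT.isConnected.dist_triangle
      _ ≤ T.dist r u + 1 := by rw [SimpleGraph.dist_eq_one_iff_adj.mpr hadj.symm]
    omega

lemma mem_other {h : Sym2 V} (hh : h ∈ T.edgeSet) {v : V} (hv : v ∈ h) :
    ∃ t, T.Adj v t ∧ h = s(v, t) := by
  induction h using Sym2.ind with
  | _ a b =>
    rw [SimpleGraph.mem_edgeSet] at hh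
    rw [Sym2.mem_iff] at hv
    rcases hv with rfl | rfl
    · exact ⟨b, hh, rfl⟩
    · exact ⟨a, hh.symm, Sym2.eq_swap⟩

lemma sym2_rep (z : Sym2 V) : ∃ a b, z = s(a, b) :=
  Sym2.ind (fun a b => ⟨a, b, rfl⟩) z

/-- the larger distance-from-`r` among the two endpoints of an edge -/
noncomputable def ekey (T : SimpleGraph V) (r : V) (h : Sym2 V) : ℕ :=
  Sym2.lift ⟨fun x y => max (T.dist r x) (T.dist r y), fun _ _ => max_comm _ _⟩ h

@[simp] lemma ekey_mk (r x y : V) : ekey T r s(x, y) = max (T.dist r x) (T.dist r y) := rfl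

lemma dist_le_ekey {r : V} {h : Sym2 V} {x : V} (hx : x ∈ h) : T.dist r x ≤ ekey T r h := by
  induction h using Sym2.ind with
  | _ a b =>
    rw [Sym2.mem_iff] at hx
    rcases hx with rfl | rfl
    · exact le_max_left _ _
    · exact le_max_right _ _

lemma rel_of_squareAdj {e f : T.edgeSet} (h : (T.lineGraph.square).Adj e f) :
    ∃ b x, b ∈ (e : Sym2 V) ∧ x ∈ (f : Sym2 V) ∧ (b = x ∨ T.Adj b x) := by
  rcases h with ⟨hne, hl | ⟨g, hg1, hg2⟩⟩
  · obtain ⟨-, v, hv1, hv2⟩ := lineGraph_adj_iff_exists.mp hl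
    exact ⟨v, v, hv1, hv2, Or.inl rfl⟩
  · obtain ⟨-, u, hu1, hu2⟩ := lineGraph_adj_iff_exists.mp hg1
    obtain ⟨-, w, hw1, hw2⟩ := lineGraph_adj_iff_exists.mp hg2
    by_cases huw : u = w
    · subst huw; exact ⟨u, u, hu1, hw2, Or.inl rfl⟩
    · refine ⟨u, w, hu1, hw2, Or.inr ?_⟩
      have hg : (g : Sym2 V) = s(u, w) := ((Sym2.mem_and_mem_iff huw).mp ⟨hu2, hw1⟩)
      have := g.2
      rw [hg, SimpleGraph.mem_edgeSet] at this
      exact this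

lemma core (hT : T.IsTree) (r : V) {w v : V} (hwv : T.Adj w v)
    (hdv : T.dist r w + 1 = T.dist r v) {h : T.edgeSet}
    (hkey : ekey T r (h : Sym2 V) ≤ T.dist r v)
    (hrel : ∃ b x, b ∈ (h : Sym2 V) ∧ x ∈ (s(w, v) : Sym2 V) ∧ (b = x ∨ T.Adj b x)) :
    w ∈ (h : Sym2 V) ∨ ∃ z, T.Adj z w ∧ T.dist r z + 1 = T.dist r w ∧ z ∈ (h : Sym2 V) := by
  obtain ⟨b, x, hbh, hxe, hR⟩ := hrel
  rw [Sym2.mem_iff] at hxe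
  rcases hR with hbx | hadj
  · rw [hbx] at hbh
    rcases hxe with h' | h' <;> rw [h'] at hbh
    · exact Or.inl hbh
    · -- v ∈ h
      obtain ⟨t, hvt, hht⟩ := mem_other h.2 hbh
      have hth : t ∈ (h : Sym2 V) := by rw [hht]; exact Sym2.mem_mk_right _ _
      rcases adj_dist hT r hvt with h1 | h1
      · exact absurd (dist_le_ekey (T := T) (r := r) hth) (by omega)
      · exact Or.inl (by rwa [parent_unique hT r hvt.symm hwv (by omega) hdv] at hth)
  · rcases hxe with h' | h' <;> rw [h'] at hadj
    · -- T.Adj b w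
      rcases adj_dist hT r hadj with h1 | h1
      · exact Or.inr ⟨b, hadj, by omega, hbh⟩
      · -- dist r b = dist r w + 1 = dist r v
        obtain ⟨t, hbt, hht⟩ := mem_other h.2 hbh
        have hth : t ∈ (h : Sym2 V) := by rw [hht]; exact Sym2.mem_mk_right _ _
        rcases adj_dist hT r hbt with h2 | h2
        · exact absurd (dist_le_ekey (T := T) (r := r) hth) (by omega)
        · have : t = w := parent_unique hT r hbt.symm hadj.symm (by omega) (by omega)
          exact Or.inl (this ▸ hth)
    · -- T.Adj b v
      rcases adj_dist hT r hadj with h1 | h1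
      · exact Or.inl (parent_unique hT r hadj hwv (by omega) hdv ▸ hbh)
      · exact absurd (dist_le_ekey (T := T) (r := r) hbh) (by omega)

end TreeBasics

section Counting

variable {V : Type*} [Fintype V] [DecidableEq V] {T : SimpleGraph V} [DecidableRel T.Adj]

/-- the edges of `T` containing `x`, as a finset of `T.edgeSet` -/
def I (T : SimpleGraph V) [DecidableRel T.Adj] (x : V) : Finset T.edgeSet :=
  Finset.univ.filter (fun h => x ∈ (h : Sym2 V))

lemma mem_I {x : V} {h : T.edgeSet} : h ∈ I T x ↔ x ∈ (h : Sym2 V) := by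
  simp [I]

lemma card_I (x : V) : (I T x).card = T.degree x := by
  rw [← SimpleGraph.card_incidenceFinset_eq_degree]
  rw [← Finset.card_image_of_injective (I T x) Subtype.val_injective]
  congr 1
  ext e
  simp only [Finset.mem_image, SimpleGraph.mem_incidenceFinset, SimpleGraph.incidenceSet]
  constructor
  · rintro ⟨h, hh, rfl⟩
    exact ⟨h.2, (mem_I.mp hh)⟩
  · rintro ⟨he, hx⟩
    exact ⟨⟨e, he⟩, mem_I.mpr hx, rfl⟩

lemma card_I_union {x y : V} (hxy : T.Adj x y) :
    (I T x ∪ I T y).card = T.degree x + T.degree y - 1 := by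
  have hinter : I T x ∩ I T y = {⟨s(x, y), hxy⟩} := by
    ext h
    simp only [Finset.mem_inter, mem_I, Finset.mem_singleton]
    constructor
    · rintro ⟨h1, h2⟩
      exact Subtype.ext ((Sym2.mem_and_mem_iff hxy.ne).mp ⟨h1, h2⟩)
    · rintro rfl
      exact ⟨Sym2.mem_mk_left _ _, Sym2.mem_mk_right _ _⟩
  have := Finset.card_union_add_card_inter (I T x) (I T y)
  rw [hinter, Finset.card_singleton, card_I, card_I] at this
  have hdx : 0 < T.degree x := (T.degree_pos_iff_exists_adj x).mpr ⟨y, hxy⟩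
  omega

lemma clique_lower {x y : V} (hxy : T.Adj x y) :
    (T.lineGraph.square).IsNClique (T.degree x + T.degree y - 1) (I T x ∪ I T y) := by
  constructor
  · rintro e he f hf hne
    simp only [Finset.coe_union, Set.mem_union, Finset.mem_coe, mem_I] at he hf
    by_cases hshare : ∃ v, v ∈ (e : Sym2 V) ∧ v ∈ (f : Sym2 V)
    · exact ⟨hne, Or.inl (lineGraph_adj_iff_exists.mpr ⟨hne, hshare⟩)⟩
    · push_neg at hshare
      have key : ∀ (a b : T.edgeSet), x ∈ (a : Sym2 V) → y ∈ (b : Sym2 V) →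
          (∀ v, v ∈ (a : Sym2 V) → v ∉ (b : Sym2 V)) → a ≠ b →
          (T.lineGraph.square).Adj a b := by
        intro a b hax hby hab hne'
        refine ⟨hne', Or.inr ⟨⟨s(x, y), hxy⟩, ?_, ?_⟩⟩
        · refine lineGraph_adj_iff_exists.mpr ⟨?_, x, hax, Sym2.mem_mk_left _ _⟩
          intro heq
          exact hab y (by rw [heq]; exact Sym2.mem_mk_right _ _) hby
        · refine lineGraph_adj_iff_exists.mpr ⟨?_, y, Sym2.mem_mk_right _ _, hby⟩
          intro heq
          exact hab x hax (by rw [← heq]; exact Sym2.mem_mk_left _ _)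
      rcases he with he | he <;> rcases hf with hf | hf
      · exact (hshare x he hf).elim
      · exact key e f he hf hshare hne
      · exact ((key f e hf he (fun v hv hv' => hshare v hv' hv) hne.symm).symm)
      · exact (hshare y he hf).elim
  · exact card_I_union hxy

lemma cover (hT : T.IsTree) (r : V) {w v : V} (hwv : T.Adj w v)
    (hdv : T.dist r w + 1 = T.dist r v) {e h : T.edgeSet} (hE : (e : Sym2 V) = s(w, v))
    (hadj : (T.lineGraph.square).Adj h e) (hkey : ekey T r (h : Sym2 V) ≤ T.dist r v) :
    w ∈ (h : Sym2 V) ∨ ∃ z, T.Adj z w ∧ T.dist r z + 1 = T.dist r w ∧ z ∈ (h : Sym2 V) := by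
  have hrel := rel_of_squareAdj hadj
  rw [hE] at hrel
  exact core hT r hwv hdv hkey hrel

lemma cover_finset (hT : T.IsTree) (r : V) {w v : V} (hwv : T.Adj w v)
    (hdv : T.dist r w + 1 = T.dist r v) (S : Finset T.edgeSet)
    (hcov : ∀ h ∈ S, w ∈ (h : Sym2 V) ∨
      ∃ z, T.Adj z w ∧ T.dist r z + 1 = T.dist r w ∧ z ∈ (h : Sym2 V)) :
    ∃ x y, T.Adj x y ∧ S ⊆ I T x ∪ I T y ∧ (w = x ∨ w = y) := by
  by_cases hw0 : T.dist r w = 0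
  · refine ⟨w, v, hwv, ?_, Or.inl rfl⟩
    intro h hh
    rcases hcov h hh with h1 | ⟨z, hz, hzd, hzh⟩
    · exact Finset.mem_union_left _ (mem_I.mpr h1)
    · exact absurd hzd (by omega)
  · obtain ⟨z₀, hz₀, hz₀d⟩ := exists_parent hT r w hw0
    refine ⟨z₀, w, hz₀, ?_, Or.inr rfl⟩
    intro h hh
    rcases hcov h hh with h1 | ⟨z, hz, hzd, hzh⟩
    · exact Finset.mem_union_right _ (mem_I.mpr h1)
    · have hzz : z = z₀ := parent_unique hT r hz hz₀ (by omega) hz₀d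
      exact Finset.mem_union_left _ (mem_I.mpr (hzz ▸ hzh))

lemma clique_upper (hT : T.IsTree) {S : Finset T.edgeSet}
    (hS : (T.lineGraph.square).IsClique ↑S) (hne : S.Nonempty) :
    ∃ x y, T.Adj x y ∧ S.card ≤ T.degree x + T.degree y - 1 := by
  obtain ⟨e₀, he₀⟩ := hne
  obtain ⟨r, r2, hr⟩ := sym2_rep (e₀ : Sym2 V)
  obtain ⟨em, hem, hmax⟩ := Finset.exists_max_image S (fun h => ekey T r (h : Sym2 V)) ⟨e₀, he₀⟩
  obtain ⟨c, d, hcd⟩ := sym2_rep (em : Sym2 V)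
  have hadj_cd : T.Adj c d := by
    have := em.2; rwa [hcd, SimpleGraph.mem_edgeSet] at this
  have main : ∀ w v : V, T.Adj w v → T.dist r w + 1 = T.dist r v → (em : Sym2 V) = s(w, v) →
      ∃ x y, T.Adj x y ∧ S.card ≤ T.degree x + T.degree y - 1 := by
    intro w v hwv hdv hE
    have hkeyem : ekey T r (em : Sym2 V) = T.dist r v := by
      rw [hE, ekey_mk]; exact max_eq_right (by omega)
    have hcov : ∀ h ∈ S, w ∈ (h : Sym2 V) ∨
        ∃ z, T.Adj z w ∧ T.dist r z + 1 = T.dist r w ∧ z ∈ (h : Sym2 V) := by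
      intro h hh
      by_cases heq : h = em
      · subst heq; left; rw [hE]; exact Sym2.mem_mk_left _ _
      · exact cover hT r hwv hdv hE (hS hh hem heq) (by rw [← hkeyem]; exact hmax h hh)
    obtain ⟨x, y, hxy, hsub, -⟩ := cover_finset hT r hwv hdv S hcov
    exact ⟨x, y, hxy, le_trans (Finset.card_le_card hsub) (le_of_eq (card_I_union hxy))⟩
  rcases adj_dist hT r hadj_cd with hor | hor
  · exact main c d hadj_cd (by omega) hcd
  · exact main d c hadj_cd.symm (by omega) (by rw [hcd]; exact Sym2.eq_swap)

lemma count_lt (hT : T.IsTree) (r : V) (M : ℕ)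
    (hM : ∀ x y, T.Adj x y → T.degree x + T.degree y - 1 ≤ M) (e : T.edgeSet)
    [DecidablePred fun h : T.edgeSet =>
      (T.lineGraph.square).Adj h e ∧ ekey T r (h : Sym2 V) ≤ ekey T r (e : Sym2 V)] :
    ((Finset.univ.filter fun h : T.edgeSet =>
      (T.lineGraph.square).Adj h e ∧ ekey T r (h : Sym2 V) ≤ ekey T r (e : Sym2 V))).card < M := by
  obtain ⟨c, d, hcd⟩ := sym2_rep (e : Sym2 V)
  have hadj_cd : T.Adj c d := by
    have := e.2; rwa [hcd, SimpleGraph.mem_edgeSet] at this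
  have main : ∀ w v : V, T.Adj w v → T.dist r w + 1 = T.dist r v → (e : Sym2 V) = s(w, v) →
      ((Finset.univ.filter fun h : T.edgeSet =>
        (T.lineGraph.square).Adj h e ∧
          ekey T r (h : Sym2 V) ≤ ekey T r (e : Sym2 V))).card < M := by
    intro w v hwv hdv hE
    have hkeye : ekey T r (e : Sym2 V) = T.dist r v := by
      rw [hE, ekey_mk]; exact max_eq_right (by omega)
    set S := (Finset.univ.filter fun h : T.edgeSet =>
      (T.lineGraph.square).Adj h e ∧ ekey T r (h : Sym2 V) ≤ ekey T r (e : Sym2 V)) with hSdef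
    have hcov : ∀ h ∈ S, w ∈ (h : Sym2 V) ∨
        ∃ z, T.Adj z w ∧ T.dist r z + 1 = T.dist r w ∧ z ∈ (h : Sym2 V) := by
      intro h hh
      rw [hSdef, Finset.mem_filter] at hh
      exact cover hT r hwv hdv hE hh.2.1 (by rw [← hkeye]; exact hh.2.2)
    obtain ⟨x, y, hxy, hsub, hwxy⟩ := cover_finset hT r hwv hdv S hcov
    have heS : e ∉ S := fun hmem =>
      (T.lineGraph.square).loopless.irrefl e (Finset.mem_filter.mp hmem).2.1
    have hsub' : S ⊆ (I T x ∪ I T y).erase e := Finset.subset_erase.mpr ⟨hsub, heS⟩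
    have heI : e ∈ I T x ∪ I T y := by
      rcases hwxy with rfl | rfl
      · exact Finset.mem_union_left _ (mem_I.mpr (by rw [hE]; exact Sym2.mem_mk_left _ _))
      · exact Finset.mem_union_right _ (mem_I.mpr (by rw [hE]; exact Sym2.mem_mk_left _ _))
    have h1 : S.card ≤ (I T x ∪ I T y).card - 1 := by
      have := Finset.card_le_card hsub'
      rwa [Finset.card_erase_of_mem heI] at this
    have h2 := card_I_union hxy
    have h3 := hM x y hxy
    have hdx : 0 < T.degree x := (T.degree_pos_iff_exists_adj x).mpr ⟨y, hxy⟩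
    have hdy : 0 < T.degree y := (T.degree_pos_iff_exists_adj y).mpr ⟨x, hxy.symm⟩
    omega
  rcases adj_dist hT r hadj_cd with hor | hor
  · exact main c d hadj_cd (by omega) hcd
  · exact main d c hadj_cd.symm (by omega) (by rw [hcd]; exact Sym2.eq_swap)

end Counting

section Greedy

variable {α : Type*} [Fintype α] [DecidableEq α] (G : SimpleGraph α) [DecidableRel G.Adj]

noncomputable def gcol (f : ℕ → α) : ℕ → ℕ
  | i => sInf {c : ℕ | c ∉ (Finset.range i).attach.biUnion
      (fun j => if G.Adj (f j.1) (f i) then {gcol f j.1} else ∅)}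
termination_by i => i
decreasing_by exact Finset.mem_range.mp j.2

noncomputable def gUsed (f : ℕ → α) (i : ℕ) : Finset ℕ :=
  (Finset.range i).attach.biUnion (fun j => if G.Adj (f j.1) (f i) then {gcol G f j.1} else ∅)

lemma gcol_eq (f : ℕ → α) (i : ℕ) : gcol G f i = sInf {c : ℕ | c ∉ gUsed G f i} := by
  rw [gcol, gUsed]

lemma gcol_not_mem (f : ℕ → α) (i : ℕ) : gcol G f i ∉ gUsed G f i := by
  rw [gcol_eq]
  obtain ⟨c, hc⟩ := Infinite.exists_notMem_finset (gUsed G f i)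
  exact Nat.sInf_mem (⟨c, hc⟩ : {c : ℕ | c ∉ gUsed G f i}.Nonempty)

lemma gcol_ne (f : ℕ → α) {j i : ℕ} (hj : j < i) (hadj : G.Adj (f j) (f i)) :
    gcol G f j ≠ gcol G f i := by
  intro heq
  apply gcol_not_mem G f i
  rw [← heq]
  apply Finset.mem_biUnion.mpr
  exact ⟨⟨j, Finset.mem_range.mpr hj⟩, Finset.mem_attach _ _, by simp [hadj]⟩

lemma gcol_le_card (f : ℕ → α) (i : ℕ) : gcol G f i ≤ (gUsed G f i).card := by
  rw [gcol_eq]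
  by_contra hlt
  push_neg at hlt
  have hall : ∀ c ≤ (gUsed G f i).card, c ∈ gUsed G f i := by
    intro c hc
    by_contra hc'
    exact absurd (Nat.sInf_le (show c ∈ {c : ℕ | c ∉ gUsed G f i} from hc')) (by omega)
  have hsub : Finset.range ((gUsed G f i).card + 1) ⊆ gUsed G f i := by
    intro c hc
    exact hall c (by simpa using Nat.lt_succ_iff.mp (Finset.mem_range.mp hc))
  have := Finset.card_le_card hsub
  simp [Finset.card_range] at this

lemma gUsed_card_le (f : ℕ → α) (i : ℕ) :
    (gUsed G f i).card ≤ (((Finset.range i).filter (fun j => G.Adj (f j) (f i))).image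
      (fun j => gcol G f j)).card := by
  apply Finset.card_le_card
  intro c hc
  obtain ⟨j, -, hj⟩ := Finset.mem_biUnion.mp hc
  by_cases hadj : G.Adj (f j.1) (f i)
  · rw [if_pos hadj, Finset.mem_singleton] at hj
    subst hj
    exact Finset.mem_image.mpr ⟨j.1, Finset.mem_filter.mpr ⟨j.2, hadj⟩, rfl⟩
  · rw [if_neg hadj] at hj
    exact absurd hj (Finset.notMem_empty _)

lemma colorable_greedy (key : α → ℕ) (M : ℕ)
    (hM : ∀ v, ((Finset.univ.filter fun u => G.Adj u v ∧ key u ≤ key v)).card < M) :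
    G.Colorable M := by
  cases isEmpty_or_nonempty α
  · exact SimpleGraph.Colorable.of_isEmpty (G := G) M
  inhabit α
  set L : List α := (Finset.univ.toList (α := α)).mergeSort (fun a b => decide (key a ≤ key b))
    with hLdef
  have hperm : L.Perm (Finset.univ.toList (α := α)) := List.mergeSort_perm _ _
  have hnodup : L.Nodup := hperm.nodup_iff.mpr (Finset.nodup_toList _)
  have hmemL : ∀ a : α, a ∈ L := fun a =>
    hperm.mem_iff.mpr (Finset.mem_toList.mpr (Finset.mem_univ a))
  have hsorted : ∀ (i j : ℕ) (hi : i < L.length) (hj : j < L.length), i < j →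
      key L[i] ≤ key L[j] := by
    have hp := List.pairwise_mergeSort (le := fun a b => decide (key a ≤ key b))
      (fun a b c h1 h2 => by simp at h1 h2 ⊢; omega)
      (fun a b => by simp; omega) (Finset.univ.toList (α := α))
    rw [← hLdef] at hp
    rw [List.pairwise_iff_getElem] at hp
    intro i j hi hj hij
    simpa using hp i j hi hj hij
  set f : ℕ → α := fun i => L.getD i default with hf
  have hfget : ∀ (i : ℕ) (hi : i < L.length), f i = L[i] := fun i hi => List.getD_eq_getElem L _ hi
  set idx : α → ℕ := fun v => List.idxOf v L with hidx
  have hidxlt : ∀ v, idx v < L.length := fun v => List.idxOf_lt_length_iff.mpr (hmemL v)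
  have hfidx : ∀ v, f (idx v) = v := fun v => by
    rw [hfget _ (hidxlt v)]; exact List.getElem_idxOf _
  have hbound : ∀ v : α, gcol G f (idx v) < M := by
    intro v
    have h1 := gcol_le_card G f (idx v)
    have h2 := gUsed_card_le G f (idx v)
    have h3 : (((Finset.range (idx v)).filter (fun j => G.Adj (f j) (f (idx v)))).image
        (fun j => gcol G f j)).card ≤
        ((Finset.range (idx v)).filter (fun j => G.Adj (f j) (f (idx v)))).card :=
      Finset.card_image_le
    have h4 : (((Finset.range (idx v)).filter (fun j => G.Adj (f j) (f (idx v))))).card ≤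
        ((Finset.univ.filter fun u => G.Adj u v ∧ key u ≤ key v)).card := by
      rw [← Finset.card_image_of_injOn (f := f)]
      · apply Finset.card_le_card
        intro u hu
        obtain ⟨j, hj, rfl⟩ := Finset.mem_image.mp hu
        rw [Finset.mem_filter] at hj ⊢
        obtain ⟨hjr, hja⟩ := hj
        have hjlt : j < idx v := Finset.mem_range.mp hjr
        have hjlen : j < L.length := lt_trans hjlt (hidxlt v)
        refine ⟨Finset.mem_univ _, ?_, ?_⟩
        · rwa [hfidx v] at hja
        · rw [← hfidx v, hfget _ hjlen, hfget _ (hidxlt v)]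
          exact hsorted _ _ hjlen (hidxlt v) hjlt
      · intro a ha b hb hab
        rw [Finset.coe_filter] at ha hb
        have ha' : a < L.length := lt_trans (Finset.mem_range.mp ha.1) (hidxlt v)
        have hb' : b < L.length := lt_trans (Finset.mem_range.mp hb.1) (hidxlt v)
        rw [hfget _ ha', hfget _ hb'] at hab
        exact (hnodup.getElem_inj_iff).mp hab
    have := hM v
    omega
  refine ⟨SimpleGraph.Coloring.mk (fun v => ⟨gcol G f (idx v), hbound v⟩) ?_⟩
  intro u v huv hEq
  rw [Fin.mk.injEq] at hEq
  have hne : idx u ≠ idx v := by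
    intro h
    apply G.ne_of_adj huv
    rw [← hfidx u, ← hfidx v, h]
  rcases lt_or_gt_of_ne hne with h | h
  · exact gcol_ne G f h (by rwa [hfidx, hfidx]) hEq
  · exact gcol_ne G f h (by rw [hfidx, hfidx]; exact huv.symm) hEq.symm

end Greedy

end StrongTreeAux

open StrongTreeAux in
/-- For a tree T, the clique number of $L(T)^2$ equals
$\max\{d(x)+d(y)-1 : xy ∈ E(T)\}$, and consequently the strong chromatic index of T
(the chromatic number of $L(T)^2$) equals this maximum as well. -/
theorem tree_strong_chromatic_index {V : Type*} [Fintype V]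
    (T : SimpleGraph V) [DecidableRel T.Adj] (hT : T.IsTree) :
    (T.lineGraph.square).cliqueNum
        = sSup {m | ∃ x y, T.Adj x y ∧ m = T.degree x + T.degree y - 1} ∧
    (T.lineGraph.square).chromaticNumber
        = (sSup {m | ∃ x y, T.Adj x y ∧ m = T.degree x + T.degree y - 1} : ℕ) := by
  classical
  set Mset := {m | ∃ x y, T.Adj x y ∧ m = T.degree x + T.degree y - 1} with hMsetDef
  have hbdd : BddAbove Mset := by
    refine ⟨2 * Fintype.card V, ?_⟩
    rintro m ⟨x, y, -, rfl⟩
    have h1 : T.degree x ≤ Fintype.card V := Finset.card_le_univ _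
    have h2 : T.degree y ≤ Fintype.card V := Finset.card_le_univ _
    omega
  rcases isEmpty_or_nonempty T.edgeSet with hempty | hne
  · -- no edges
    haveI := hempty
    have hMe : Mset = ∅ := Set.eq_empty_iff_forall_notMem.mpr
      (fun m ⟨x, y, hxy, _⟩ => hempty.false ⟨s(x, y), hxy⟩)
    have hsup : sSup Mset = 0 := by rw [hMe]; exact csSup_empty
    constructor
    · rw [hsup]
      obtain ⟨s, hs⟩ := SimpleGraph.exists_isNClique_cliqueNum (G := T.lineGraph.square)
      rw [← hs.card_eq]
      simp [Finset.eq_empty_of_isEmpty s]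
    · have h0 := SimpleGraph.chromaticNumber_eq_zero_of_isEmpty (G := T.lineGraph.square)
      simp [hsup, h0]
  · -- at least one edge
    obtain ⟨e₁⟩ := hne
    obtain ⟨x₁, y₁, hxy₁E⟩ := sym2_rep (e₁ : Sym2 V)
    have hxy₁ : T.Adj x₁ y₁ := by
      have := e₁.2; rwa [hxy₁E, SimpleGraph.mem_edgeSet] at this
    set M := sSup Mset with hMdef
    have hMem : ∀ x y, T.Adj x y → T.degree x + T.degree y - 1 ≤ M :=
      fun x y h => le_csSup hbdd ⟨x, y, h, rfl⟩
    have hd₁ : 0 < T.degree x₁ := (T.degree_pos_iff_exists_adj x₁).mpr ⟨y₁, hxy₁⟩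
    have hd₂ : 0 < T.degree y₁ := (T.degree_pos_iff_exists_adj y₁).mpr ⟨x₁, hxy₁.symm⟩
    have hM1 : 1 ≤ M := le_trans (by omega) (hMem x₁ y₁ hxy₁)
    have hlow : M ≤ (T.lineGraph.square).cliqueNum := by
      refine csSup_le ⟨_, x₁, y₁, hxy₁, rfl⟩ ?_
      rintro m ⟨x, y, hxy, rfl⟩
      have hcl := clique_lower (T := T) hxy
      have := SimpleGraph.IsClique.card_le_cliqueNum (tc := hcl.isClique)
      rwa [hcl.card_eq] at this
    have hup : (T.lineGraph.square).cliqueNum ≤ M := by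
      obtain ⟨s, hs⟩ := SimpleGraph.exists_isNClique_cliqueNum (G := T.lineGraph.square)
      rcases Finset.eq_empty_or_nonempty s with rfl | hsne
      · rw [← hs.card_eq]; simp
      · obtain ⟨x, y, hxy, hle⟩ := clique_upper hT hs.isClique hsne
        rw [← hs.card_eq]
        exact le_trans hle (hMem x y hxy)
    have hcn : (T.lineGraph.square).cliqueNum = M := le_antisymm hup hlow
    refine ⟨hcn, ?_⟩
    have hcol : (T.lineGraph.square).Colorable M := by
      apply colorable_greedy (T.lineGraph.square) (fun h => ekey T x₁ (h : Sym2 V)) M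
      intro e
      exact count_lt hT x₁ M hMem e
    have hle : (T.lineGraph.square).chromaticNumber ≤ (M : ℕ∞) :=
      hcol.chromaticNumber_le
    have hge : (M : ℕ∞) ≤ (T.lineGraph.square).chromaticNumber := by
      obtain ⟨s, hs⟩ := SimpleGraph.exists_isNClique_cliqueNum (G := T.lineGraph.square)
      have := hs.isClique.card_le_chromaticNumber
      rwa [hs.card_eq, hcn] at this
    exact le_antisymm hle hge
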